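/- arXiv:2311.01389 — 9 statements merged into one kernel-verified Lean document; each statement's English description precedes it below -/
import Mathlib

section
/- Let M be a semilattice over C in which a duple (s_L, s_R) of terms satisfies s_L ≰ s_R. Let K = {c ∈ C : c ≰ s_R in M}, and let φ be the atom with U(φ) = K. Then K is nonempty, φ discriminates (s_L, s_R), and φ is compatible with M: for every duple (r_L, r_R) discriminated by φ, r_L ≰ r_R in M. -/
/-- Existence of a compatible discriminating atom.  `M` is a join-semilattice
generated by constants `C`, with terms `T` (nonempty subsets of `C` whose joins
exist in `M`), where `j t` denotes the join in `M` of the constants of `t`,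
i.e. the least upper bound of `{j {c} : c ∈ t}`.  If a duple `(sL, sR)` of
terms satisfies `j sL ≰ j sR`, then `K = {c : j {c} ≰ j sR}` is nonempty, the
atom `φ :< K` discriminates `(sL, sR)`, and `φ` is compatible with `M`. -/
theorem stmt_7 {C : Type*} {M : Type*} [SemilatticeSup M]
    (T : Set (Set C)) (j : Set C → M)
    (hsingle : ∀ c : C, ({c} : Set C) ∈ T)
    (hub : ∀ t ∈ T, ∀ c ∈ t, j {c} ≤ j t)
    (hlub : ∀ t ∈ T, ∀ x : M, (∀ c ∈ t, j {c} ≤ x) → j t ≤ x)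
    (sL sR : Set C) (hsL : sL ∈ T) (hsR : sR ∈ T)
    (hneg : ¬ j sL ≤ j sR) :
    let K : Set C := {c | ¬ j {c} ≤ j sR}
    K.Nonempty ∧ (K ∩ sL).Nonempty ∧ K ∩ sR = ∅ ∧
      ∀ rL ∈ T, ∀ rR ∈ T, (K ∩ rL).Nonempty → K ∩ rR = ∅ → ¬ j rL ≤ j rR := by
  intro K
  have hKL : (K ∩ sL).Nonempty := by
    by_contra h
    rw [Set.not_nonempty_iff_eq_empty] at h
    apply hneg
    apply hlub sL hsL
    intro c hc
    by_contra hc'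
    exact absurd h (Set.nonempty_iff_ne_empty.mp ⟨c, hc', hc⟩)
  refine ⟨⟨hKL.choose, hKL.choose_spec.1⟩, hKL, ?_, ?_⟩
  · ext c
    simp only [Set.mem_inter_iff, Set.mem_setOf_eq, Set.mem_empty_iff_false, iff_false, not_and]
    intro hc hc2
    exact hc (hub sR hsR c hc2)
  · rintro rL hrL rR hrR ⟨c, hcK, hcL⟩ hR hle
    apply hcK
    calc j {c} ≤ j rL := hub rL hrL c hcL
      _ ≤ j rR := hle
      _ ≤ j sR := hlub rR hrR _ (fun d hd => by
        by_contra hd'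
        exact absurd hR (Set.nonempty_iff_ne_empty.mp ⟨d, hd', hd⟩))
end

section
/- Every semilattice M generated by a set of constants C is atomizable: there exists a set A of atoms (nonempty subsets of C) such that for all terms s, t of M, s ≤ t in M if and only if every atom in A that meets C(s) also meets C(t). -/
/-- Every semilattice generated by a set of constants `C` is atomizable: there
is a set `A` of atoms (nonempty subsets of `C`) such that for all terms `s, t`
of `M`, `j s ≤ j t` iff every atom of `A` meeting `s` also meets `t`.  Here `T`
is the set of terms (containing all singletons) and `j t` is the join in `M`
of the constants of `t` (its least upper bound). -/
theorem stmt_8 {C : Type*} {M : Type*} [SemilatticeSup M]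
    (T : Set (Set C)) (j : Set C → M)
    (hsingle : ∀ c : C, ({c} : Set C) ∈ T)
    (hub : ∀ t ∈ T, ∀ c ∈ t, j {c} ≤ j t)
    (hlub : ∀ t ∈ T, ∀ x : M, (∀ c ∈ t, j {c} ≤ x) → j t ≤ x) :
    ∃ A : Set (Set C), (∀ φ ∈ A, φ.Nonempty) ∧
      ∀ s ∈ T, ∀ t ∈ T,
        (j s ≤ j t ↔ ∀ φ ∈ A, (φ ∩ s).Nonempty → (φ ∩ t).Nonempty) := by
  refine ⟨{φ | (∃ x : M, φ = {c | ¬ j {c} ≤ x}) ∧ φ.Nonempty}, fun φ hφ => hφ.2, ?_⟩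
  intro s hs t ht
  constructor
  · rintro hst φ ⟨⟨x, rfl⟩, -⟩ ⟨c, hcφ, hcs⟩
    by_contra hempty
    have htx : j t ≤ x := by
      apply hlub t ht
      intro c' hc'
      by_contra h
      exact hempty ⟨c', h, hc'⟩
    exact hcφ (le_trans (le_trans (hub s hs c hcs) hst) htx)
  · intro h
    apply hlub s hs
    intro c hcs
    by_contra hc
    rcases h {c' | ¬ j {c'} ≤ j t} ⟨⟨j t, rfl⟩, ⟨c, hc⟩⟩ ⟨c, hc, hcs⟩ with ⟨c', hc', hc't⟩
    exact hc' (hub t ht c' hc't)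
end

section
/- Full crossing produces a consistent model of the crossed duple: let M be atomized by A, let r = (r_L, r_R) be a duple with M ⊨ r⁻, let H = {φ ∈ A : φ < r_L and φ ≮ r_R} and B = {ψ ∈ A : ψ < r_R}. Then B is nonempty, no atom in (A \ H) ∪ (H ▽ B) discriminates r, and for every term t there is an atom of (A \ H) ∪ (H ▽ B) below t (where H ▽ B = {φ ▽ ψ : φ ∈ H, ψ ∈ B}). -/
/-- Full crossing produces a consistent model of the crossed duple.  `A`
atomizes the order `le` on the terms `T` of `M`, `A` satisfies AS6, the duple
`r = (rL, rR)` is negative in `M`, `H = dis_M(r)`, `B = L^a_M(rR)`.  Then `B`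
is nonempty, no atom of `(A \ H) ∪ (H ▽ B)` discriminates `r`, and every term
has an atom of `(A \ H) ∪ (H ▽ B)` below it. -/
theorem stmt_9 {C : Type*} (T : Set (Set C)) (le : Set C → Set C → Prop)
    (A : Set (Set C))
    (hAatom : ∀ s ∈ T, ∀ t ∈ T,
      (le s t ↔ ∀ φ ∈ A, (φ ∩ s).Nonempty → (φ ∩ t).Nonempty))
    (hAS6 : ∀ t ∈ T, ∃ φ ∈ A, (φ ∩ t).Nonempty)
    (rL rR : Set C) (hrL : rL ∈ T) (hrR : rR ∈ T) (hneg : ¬ le rL rR) :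
    let H : Set (Set C) := {φ ∈ A | (φ ∩ rL).Nonempty ∧ φ ∩ rR = ∅}
    let B : Set (Set C) := {ψ ∈ A | (ψ ∩ rR).Nonempty}
    let A' : Set (Set C) := (A \ H) ∪ {χ | ∃ φ ∈ H, ∃ ψ ∈ B, χ = φ ∪ ψ}
    B.Nonempty ∧
      (∀ χ ∈ A', ¬ ((χ ∩ rL).Nonempty ∧ χ ∩ rR = ∅)) ∧
      (∀ t ∈ T, ∃ χ ∈ A', (χ ∩ t).Nonempty) := by
  intro H B A'
  obtain ⟨ψ0, hψ0A, hψ0R⟩ := hAS6 rR hrR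
  have hB : B.Nonempty := ⟨ψ0, hψ0A, hψ0R⟩
  refine ⟨hB, ?_, ?_⟩
  · rintro χ (⟨hχA, hχH⟩ | ⟨φ, hφH, ψ, hψB, rfl⟩)
    · exact fun h => hχH ⟨hχA, h⟩
    · rintro ⟨-, hE⟩
      obtain ⟨c, hc⟩ := hψB.2
      exact absurd hE (by
        intro hE
        have : c ∈ (φ ∪ ψ) ∩ rR := ⟨Or.inr hc.1, hc.2⟩
        rw [hE] at this
        exact this)
  · intro t ht
    obtain ⟨φ, hφA, hφt⟩ := hAS6 t ht
    by_cases hφ : φ ∈ H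
    · refine ⟨φ ∪ ψ0, Or.inr ⟨φ, hφ, ψ0, ⟨hψ0A, hψ0R⟩, rfl⟩, ?_⟩
      obtain ⟨c, hc⟩ := hφt
      exact ⟨c, Or.inl hc.1, hc.2⟩
    · exact ⟨φ, Or.inl ⟨hφA, hφ⟩, hφt⟩
end

section
/- Logical consequences of full crossing: let M be a semilattice atomized by A, let r = (r_L, r_R) be a duple, and let □_r M be the semilattice atomized by (A \ H) ∪ (H ▽ B) with H = dis_M(r) and B = L^a_M(r_R). If a duple s = (s_L, s_R) satisfies M ⊨ s⁻ and □_r M ⊨ s⁺, then in M both s_L ≤ s_R ⊔ r_L and r_R ≤ s_R hold. -/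
/-- Logical consequences of full crossing.  Writing `pos A s t` for "every atom
of `A` below `s` is below `t`" (the order of the model atomized by `A`), if a
duple `s = (sL, sR)` is negative in `M` (atomized by `A`) and positive in
`□_r M` (atomized by `(A \ H) ∪ (H ▽ B)`), then in `M` both
`sL ≤ sR ⊔ rL` and `rR ≤ sR` hold. -/
theorem stmt_10 {C : Type*} (A : Set (Set C)) (rL rR sL sR : Set C) :
    let pos : Set (Set C) → Set C → Set C → Prop :=
      fun B s t => ∀ φ ∈ B, (φ ∩ s).Nonempty → (φ ∩ t).Nonempty
    let H : Set (Set C) := {φ ∈ A | (φ ∩ rL).Nonempty ∧ φ ∩ rR = ∅}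
    let B : Set (Set C) := {ψ ∈ A | (ψ ∩ rR).Nonempty}
    let A' : Set (Set C) := (A \ H) ∪ {χ | ∃ φ ∈ H, ∃ ψ ∈ B, χ = φ ∪ ψ}
    ¬ pos A sL sR → pos A' sL sR →
      pos A sL (sR ∪ rL) ∧ pos A rR sR := by
  intro pos H B A' hneg hpos
  constructor
  · intro φ hφ hφs
    by_cases hH : φ ∈ H
    · obtain ⟨x, hx⟩ := hH.2.1
      exact ⟨x, hx.1, Or.inr hx.2⟩
    · obtain ⟨x, hx⟩ := hpos φ (Or.inl ⟨hφ, hH⟩) hφs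
      exact ⟨x, hx.1, Or.inl hx.2⟩
  · -- get a violating atom
    simp only [pos, not_forall, exists_prop] at hneg
    obtain ⟨φ₀, hφ₀A, hφ₀s, hφ₀r⟩ := hneg
    rw [Set.not_nonempty_iff_eq_empty] at hφ₀r
    have hφ₀H : φ₀ ∈ H := by
      by_contra hH
      obtain ⟨x, hx⟩ := hpos φ₀ (Or.inl ⟨hφ₀A, hH⟩) hφ₀s
      exact absurd hφ₀r (by simp [Set.eq_empty_iff_forall_notMem]; exact ⟨x, hx.1, hx.2⟩)
    intro ψ hψ hψr
    have hχ : φ₀ ∪ ψ ∈ A' := Or.inr ⟨φ₀, hφ₀H, ψ, ⟨hψ, hψr⟩, rfl⟩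
    obtain ⟨x, hx⟩ := hφ₀s
    obtain ⟨y, hy⟩ := hpos (φ₀ ∪ ψ) hχ ⟨x, Or.inl hx.1, hx.2⟩
    rcases hy.1 with h | h
    · exact absurd hφ₀r (by simp [Set.eq_empty_iff_forall_notMem]; exact ⟨y, h, hy.2⟩)
    · exact ⟨y, h, hy.2⟩
end

section
/- Full crossing yields the freest model: with notation as above, □_r M is the freest semilattice with the same terms as M that models Th₀⁺(M) ∪ {r⁺}; that is, □_r M ⊨ Th₀⁺(M) ∪ {r⁺}, and for any duple s with □_r M ⊨ s⁺, s⁺ follows from Th₀⁺(M) together with r⁺ (specifically, M ⊨ s_L ≤ s_R ⊔ r_L and M ⊨ r_R ≤ s_R, so s⁺ holds in any model of Th₀⁺(M) ∪ {r⁺}). -/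
/-- Full crossing yields the freest model of `Th₀⁺(M) ∪ {r⁺}`: with
`pos B s t` meaning "every atom of `B` below `s` is below `t`", the model
atomized by `A' = (A \ dis(r)) ∪ (dis(r) ▽ L^a(rR))` (i) satisfies `r⁺`,
(ii) satisfies every positive duple of `M`, and (iii) every duple positive in
`□_r M` holds in any semilattice-like order `le` on terms which models
`Th₀⁺(M)` together with `r⁺`. -/
theorem stmt_11 {C : Type*} (A : Set (Set C)) (rL rR : Set C) :
    let pos : Set (Set C) → Set C → Set C → Prop :=
      fun B s t => ∀ φ ∈ B, (φ ∩ s).Nonempty → (φ ∩ t).Nonempty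
    let H : Set (Set C) := {φ ∈ A | (φ ∩ rL).Nonempty ∧ φ ∩ rR = ∅}
    let B : Set (Set C) := {ψ ∈ A | (ψ ∩ rR).Nonempty}
    let A' : Set (Set C) := (A \ H) ∪ {χ | ∃ φ ∈ H, ∃ ψ ∈ B, χ = φ ∪ ψ}
    pos A' rL rR ∧
      (∀ a b : Set C, pos A a b → pos A' a b) ∧
      (∀ le : Set C → Set C → Prop,
        (∀ a : Set C, le a a) →
        (∀ a b c : Set C, le a b → le b c → le a c) →
        (∀ a b a' b' : Set C, le a b → le a' b' → le (a ∪ a') (b ∪ b')) →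
        (∀ a b : Set C, pos A a b → le a b) →
        le rL rR →
        ∀ sL sR : Set C, pos A' sL sR → le sL sR) := by
  intro pos H B A'
  refine ⟨?_, ?_, ?_⟩
  · -- (i)
    rintro χ (⟨hχA, hχH⟩ | ⟨φ, hφ, ψ, ⟨hψA, hψR⟩, rfl⟩) hL
    · by_contra hempty
      exact hχH ⟨hχA, hL, Set.not_nonempty_iff_eq_empty.mp hempty⟩
    · obtain ⟨x, hx⟩ := hψR
      exact ⟨x, Or.inr hx.1, hx.2⟩
  · -- (ii)
    intro a b hab
    rintro χ (⟨hχA, _⟩ | ⟨φ, ⟨hφA, _⟩, ψ, ⟨hψA, _⟩, rfl⟩) hχa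
    · exact hab χ hχA hχa
    · obtain ⟨x, hx1, hx2⟩ := hχa
      rcases hx1 with h | h
      · obtain ⟨y, hy⟩ := hab φ hφA ⟨x, h, hx2⟩
        exact ⟨y, Or.inl hy.1, hy.2⟩
      · obtain ⟨y, hy⟩ := hab ψ hψA ⟨x, h, hx2⟩
        exact ⟨y, Or.inr hy.1, hy.2⟩
  · -- (iii)
    intro le hrefl htrans hmono hA hr sL sR hs
    by_cases hcase : ∀ φ ∈ A, (φ ∩ sL).Nonempty → (φ ∩ sR).Nonempty
    · exact hA sL sR hcase
    · -- there is φ₀ ∈ A with φ₀ ∩ sL nonempty, φ₀ ∩ sR = ∅; it lies in H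
      push_neg at hcase
      obtain ⟨φ₀, hφ₀A, hφ₀L, hφ₀R⟩ := hcase
      have hφ₀H : φ₀ ∈ H := by
        by_contra hnH
        have := hs φ₀ (Or.inl ⟨hφ₀A, hnH⟩) hφ₀L
        rw [hφ₀R] at this
        exact Set.not_nonempty_empty this
      -- pos A rR sR
      have h4 : le rR sR := by
        apply hA
        intro ψ hψA hψR
        have hmem : φ₀ ∪ ψ ∈ A' := Or.inr ⟨φ₀, hφ₀H, ψ, ⟨hψA, hψR⟩, rfl⟩
        obtain ⟨x, hx1, hx2⟩ := hs _ hmem ⟨hφ₀L.choose, Or.inl hφ₀L.choose_spec.1,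
          hφ₀L.choose_spec.2⟩
        rcases hx1 with h | h
        · exact absurd (Set.eq_empty_iff_forall_notMem.mp hφ₀R x ⟨h, hx2⟩) (fun h => h)
        · exact ⟨x, h, hx2⟩
      -- pos A sL (sR ∪ rL)
      have h1 : le sL (sR ∪ rL) := by
        apply hA
        intro φ hφA hφL
        by_cases hφH : φ ∈ H
        · obtain ⟨y, hy⟩ := hφH.2.1
          exact ⟨y, hy.1, Or.inr hy.2⟩
        · obtain ⟨y, hy⟩ := hs φ (Or.inl ⟨hφA, hφH⟩) hφL
          exact ⟨y, hy.1, Or.inl hy.2⟩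
      have h3 : le (sR ∪ rL) (sR ∪ rR) := hmono _ _ _ _ (hrefl sR) hr
      have h5 : le (sR ∪ rR) (sR ∪ sR) := hmono _ _ _ _ (hrefl sR) h4
      rw [Set.union_self] at h5
      exact htrans _ _ _ h1 (htrans _ _ _ h3 h5)
end

section
/- Removability criterion for atoms: let M be an atomized semilattice over C with terms T atomized by A, and φ an atom. Then A \ {φ} and A ∪ {φ} both atomize M if and only if for every constant c ∈ U(φ) and every term t ∈ T with C(t) ⊆ C \ U(φ), there is an atom ψ ∈ A with ψ ≠ φ, ψ < c, and ψ ≮ t. -/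
/-- Removability criterion for atoms: if `M` is atomized by `A` over constants
`C` with terms `T`, then `A \ {φ}` and `A ∪ {φ}` both atomize `M` iff for every
constant `c ∈ U(φ)` and every term `t ∈ T` with `C(t) ⊆ C \ U(φ)` there is an
atom `ψ ∈ A` with `ψ ≠ φ`, `ψ < c` and `ψ ≮ t`. -/
theorem stmt_15 {C : Type*} (T : Set (Set C))
    (hTsingle : ∀ c : C, ({c} : Set C) ∈ T)
    (hTunion : ∀ s ∈ T, ∀ t ∈ T, s ∪ t ∈ T)
    (A : Set (Set C)) (hA : ∀ ψ ∈ A, ψ.Nonempty)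
    (φ : Set C) (hφ : φ.Nonempty) :
    let pos : Set (Set C) → Set C → Set C → Prop :=
      fun B s t => ∀ χ ∈ B, (χ ∩ s).Nonempty → (χ ∩ t).Nonempty
    ((∀ s ∈ T, ∀ t ∈ T, (pos A s t ↔ pos (A \ {φ}) s t)) ∧
     (∀ s ∈ T, ∀ t ∈ T, (pos A s t ↔ pos (A ∪ {φ}) s t))) ↔
      ∀ c ∈ φ, ∀ t ∈ T, t ∩ φ = ∅ →
        ∃ ψ ∈ A, ψ ≠ φ ∧ c ∈ ψ ∧ ψ ∩ t = ∅ := by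
  intro pos
  constructor
  · rintro ⟨h1, h2⟩ c hc t ht htφ
    have hφt : ¬ (φ ∩ t).Nonempty := by
      rintro ⟨x, hx1, hx2⟩
      exact Set.eq_empty_iff_forall_notMem.mp htφ x ⟨hx2, hx1⟩
    have hnot : ¬ pos (A \ {φ}) ({c} : Set C) t := by
      intro hp
      have hpA : pos A {c} t := (h1 {c} (hTsingle c) t ht).mpr hp
      have hpU : pos (A ∪ {φ}) {c} t := (h2 {c} (hTsingle c) t ht).mp hpA
      exact hφt (hpU φ (Or.inr rfl) ⟨c, hc, rfl⟩)
    obtain ⟨ψ, hψmem, hψc, hψt⟩ :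
        ∃ ψ ∈ A \ {φ}, (ψ ∩ ({c} : Set C)).Nonempty ∧ ¬ (ψ ∩ t).Nonempty := by
      by_contra hcon
      push_neg at hcon
      exact hnot fun χ hχ hχs => hcon χ hχ hχs
    obtain ⟨hψA, hψne⟩ := hψmem
    refine ⟨ψ, hψA, hψne, ?_, ?_⟩
    · obtain ⟨x, hx1, hx2⟩ := hψc
      rcases hx2 with rfl
      exact hx1
    · exact Set.not_nonempty_iff_eq_empty.mp hψt
  · intro hR
    constructor
    · intro s hs t ht
      constructor
      · intro hp χ hχ hχs
        exact hp χ hχ.1 hχs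
      · intro hp χ hχ hχs
        by_cases hχφ : χ = φ
        · subst hχφ
          by_contra hne
          have hχt : χ ∩ t = ∅ := Set.not_nonempty_iff_eq_empty.mp hne
          obtain ⟨c, hcχ, hcs⟩ := hχs
          obtain ⟨ψ, hψA, hψne, hcψ, hψt⟩ := hR c hcχ t ht (by rw [Set.inter_comm]; exact hχt)
          have := hp ψ ⟨hψA, hψne⟩ ⟨c, hcψ, hcs⟩
          rw [hψt] at this
          exact Set.not_nonempty_empty this
        · exact hp χ ⟨hχ, hχφ⟩ hχs
    · intro s hs t ht
      constructor
      · intro hp χ hχ hχs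
        rcases hχ with hχ | hχ
        · exact hp χ hχ hχs
        · rcases hχ with rfl
          by_contra hne
          have hχt : χ ∩ t = ∅ := Set.not_nonempty_iff_eq_empty.mp hne
          obtain ⟨c, hcχ, hcs⟩ := hχs
          obtain ⟨ψ, hψA, hψne, hcψ, hψt⟩ := hR c hcχ t ht (by rw [Set.inter_comm]; exact hχt)
          have := hp ψ hψA ⟨c, hcψ, hcs⟩
          rw [hψt] at this
          exact Set.not_nonempty_empty this
      · intro hp χ hχ hχs
        exact hp χ (Or.inl hχ) hχs
end

section
/- If a semilattice M can be atomized by a set A of atoms all of whose upper constant segments are finite, then M is atomized by the set of its non-redundant atoms; in particular, every atom of A is a join of atoms non-redundant with M. -/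
/-- If a semilattice `M` (order `le` on terms `T`) can be atomized by a set `A`
of atoms all of whose upper constant segments are finite, then `M` is atomized
by its non-redundant atoms; in particular every atom of `A` is a join (union)
of atoms non-redundant with `M`. -/
theorem stmt_17 {C : Type*} (T : Set (Set C)) (le : Set C → Set C → Prop)
    (A : Set (Set C)) (hAfin : ∀ φ ∈ A, φ.Finite) (hAne : ∀ φ ∈ A, φ.Nonempty)
    (hAatom : ∀ s ∈ T, ∀ t ∈ T,
      (le s t ↔ ∀ φ ∈ A, (φ ∩ s).Nonempty → (φ ∩ t).Nonempty)) :
    let compatible : Set C → Prop := fun χ => χ.Nonempty ∧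
      ∀ s ∈ T, ∀ t ∈ T, (χ ∩ s).Nonempty → χ ∩ t = ∅ → ¬ le s t
    let redundant : Set C → Prop := fun χ => compatible χ ∧
      ∃ S : Set (Set C), (∀ ψ ∈ S, compatible ψ) ∧ χ ∉ S ∧ χ = ⋃₀ S
    let NR : Set (Set C) := {χ | compatible χ ∧ ¬ redundant χ}
    (∀ s ∈ T, ∀ t ∈ T,
        (le s t ↔ ∀ φ ∈ NR, (φ ∩ s).Nonempty → (φ ∩ t).Nonempty)) ∧
      ∀ φ ∈ A, ∃ S ⊆ NR, φ = ⋃₀ S := by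
  intro compatible redundant NR
  have key : ∀ n : ℕ, ∀ χ : Set C, χ.Finite → χ.ncard ≤ n → compatible χ →
      ∃ S ⊆ NR, χ = ⋃₀ S := by
    intro n
    induction n with
    | zero =>
      intro χ hfin hcard hcomp
      exfalso
      have h0 : 0 < χ.ncard := (Set.ncard_pos hfin).mpr hcomp.1
      omega
    | succ n ih =>
      intro χ hfin hcard hcomp
      by_cases hnr : χ ∈ NR
      · exact ⟨{χ}, by simpa using hnr, by simp⟩
      · have hred : redundant χ := by
          by_contra h
          exact hnr ⟨hcomp, h⟩
        obtain ⟨-, S₀, hS₀comp, hχS₀, hχeq⟩ := hred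
        have hsub : ∀ ψ ∈ S₀, ψ ⊆ χ := fun ψ hψ =>
          hχeq ▸ Set.subset_sUnion_of_mem hψ
        have hlt : ∀ ψ ∈ S₀, ψ.ncard ≤ n := by
          intro ψ hψ
          have hne : ψ ≠ χ := fun h => hχS₀ (h ▸ hψ)
          have hss : ψ ⊂ χ := (hsub ψ hψ).ssubset_of_ne hne
          have := Set.ncard_lt_ncard hss hfin
          omega
        have hex : ∀ ψ ∈ S₀, ∃ S ⊆ NR, ψ = ⋃₀ S := fun ψ hψ =>
          ih ψ (hfin.subset (hsub ψ hψ)) (hlt ψ hψ) (hS₀comp ψ hψ)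
        choose! f hf1 hf2 using hex
        refine ⟨⋃ ψ ∈ S₀, f ψ, ?_, ?_⟩
        · intro σ hσ
          simp only [Set.mem_iUnion] at hσ
          obtain ⟨ψ, hψ, h⟩ := hσ
          exact hf1 ψ hψ h
        · ext c
          rw [hχeq]
          constructor
          · rintro ⟨ψ, hψ, hc⟩
            rw [hf2 ψ hψ] at hc
            obtain ⟨σ, hσ, hcσ⟩ := hc
            exact ⟨σ, Set.mem_iUnion₂.mpr ⟨ψ, hψ, hσ⟩, hcσ⟩
          · rintro ⟨σ, hσ, hc⟩
            obtain ⟨ψ, hψ, hσ'⟩ := Set.mem_iUnion₂.mp hσ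
            exact ⟨ψ, hψ, (hf2 ψ hψ) ▸ ⟨σ, hσ', hc⟩⟩
  have hAcomp : ∀ φ ∈ A, compatible φ := by
    intro φ hφ
    refine ⟨hAne φ hφ, ?_⟩
    intro s hs t ht hφs hφt hle
    have := (hAatom s hs t ht).mp hle φ hφ hφs
    rw [hφt] at this
    exact Set.not_nonempty_empty this
  have hAdecomp : ∀ φ ∈ A, ∃ S ⊆ NR, φ = ⋃₀ S := fun φ hφ =>
    key (φ.ncard) φ (hAfin φ hφ) le_rfl (hAcomp φ hφ)
  refine ⟨?_, hAdecomp⟩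
  intro s hs t ht
  constructor
  · intro hle χ hχ hχs
    by_contra h
    have hχt : χ ∩ t = ∅ := Set.not_nonempty_iff_eq_empty.mp h
    exact hχ.1.2 s hs t ht hχs hχt hle
  · intro h
    rw [hAatom s hs t ht]
    intro φ hφ hφs
    obtain ⟨S, hSNR, hφeq⟩ := hAdecomp φ hφ
    obtain ⟨c, hcφ, hcs⟩ := hφs
    rw [hφeq] at hcφ
    obtain ⟨ψ, hψS, hcψ⟩ := hcφ
    obtain ⟨d, hdψ, hdt⟩ := h ψ (hSNR hψS) ⟨c, hcψ, hcs⟩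
    exact ⟨d, hφeq ▸ ⟨ψ, hψS, hdψ⟩, hdt⟩
end

section
/- Limit atoms in finitely generated semilattices: let M be a finitely generated atomized semilattice over an infinite constant set C (all terms finite subsets of C), and let φ₀ < φ₁ < φ₂ < ⋯ be a strictly ascending chain of compatible atoms (so U(φ₀) ⊋ U(φ₁) ⊋ ⋯). If U = ⋂_{i≥0} U(φᵢ) is nonempty, then the atom ψ with U(ψ) = U is compatible with M: every duple (s, t) of finite terms discriminated by ψ is also discriminated by some φⱼ. -/
/-- Limit atoms in finitely generated semilattices: `M` is a semilattice over
an infinite constant set `C` whose terms are the finite nonempty subsets of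
`C`, with order `le`; `φ₀ < φ₁ < ⋯` is a strictly ascending chain of atoms
compatible with `M` (so `U(φ₀) ⊋ U(φ₁) ⊋ ⋯`).  If `U = ⋂ᵢ U(φᵢ)` is nonempty,
then the limit atom `ψ :< U` is compatible with `M`: every duple of finite
terms discriminated by `ψ` is discriminated by some `φⱼ`, hence negative. -/
theorem stmt_18 {C : Type*} [Infinite C] (le : Set C → Set C → Prop)
    (φ : ℕ → Set C) (hchain : ∀ i, φ (i + 1) ⊂ φ i)
    (hcompat : ∀ i, (φ i).Nonempty ∧
      ∀ s t : Set C, s.Finite → s.Nonempty → t.Finite → t.Nonempty →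
        (φ i ∩ s).Nonempty → φ i ∩ t = ∅ → ¬ le s t)
    (hU : (⋂ i, φ i).Nonempty) :
    ∀ s t : Set C, s.Finite → s.Nonempty → t.Finite → t.Nonempty →
      ((⋂ i, φ i) ∩ s).Nonempty → (⋂ i, φ i) ∩ t = ∅ →
        (∃ j, (φ j ∩ s).Nonempty ∧ φ j ∩ t = ∅) ∧ ¬ le s t := by
  intro s t hsf hsn htf htn hins hint
  have hanti : ∀ i j : ℕ, i ≤ j → φ j ⊆ φ i := by
    intro i j hij
    induction hij with
    | refl => exact subset_rfl
    | step h ih => exact (hchain _).1.trans ih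
  -- for each x ∈ t, find an index excluding it
  have hex : ∀ x ∈ t, ∃ i, x ∉ φ i := by
    intro x hx
    by_contra h
    push_neg at h
    have : x ∈ (⋂ i, φ i) ∩ t := ⟨Set.mem_iInter.2 h, hx⟩
    simp [hint] at this
  classical
  choose f hf using hex
  obtain ⟨N, hN⟩ := (htf.image (fun x => if hx : x ∈ t then f x hx else 0)).bddAbove
  have hNt : φ N ∩ t = ∅ := by
    ext x
    simp only [Set.mem_inter_iff, Set.mem_empty_iff_false, iff_false, not_and]
    intro hxφ hxt
    have hle : f x hxt ≤ N := by
      have : (fun x => if hx : x ∈ t then f x hx else 0) x ∈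
          (fun x => if hx : x ∈ t then f x hx else 0) '' t := ⟨x, hxt, rfl⟩
      have := hN this
      simpa [hxt] using this
    exact hf x hxt (hanti _ _ hle hxφ)
  obtain ⟨x, hxI, hxs⟩ := hins
  have hNs : (φ N ∩ s).Nonempty := ⟨x, Set.mem_iInter.1 hxI N, hxs⟩
  exact ⟨⟨N, hNs, hNt⟩, (hcompat N).2 s t hsf hsn htf htn hNs hNt⟩
end

section
/- In a finitely generated semilattice over an infinite set of constants, every redundant atom is equal to a union of atoms non-redundant with the semilattice; equivalently, the non-redundant atoms of S atomize S. -/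
/-- In a finitely generated semilattice `S` over an infinite set of constants
`C` (terms: the finite nonempty subsets of `C`, order `le`, atomized by some
atomization `A`), every atom redundant with `S` is a union of atoms
non-redundant with `S`; equivalently, the non-redundant atoms atomize `S`. -/
theorem stmt_19 {C : Type*} [Infinite C] (le : Set C → Set C → Prop)
    (A : Set (Set C)) (hAne : ∀ φ ∈ A, φ.Nonempty)
    (hAatom : ∀ s t : Set C, s.Finite → s.Nonempty → t.Finite → t.Nonempty →
      (le s t ↔ ∀ φ ∈ A, (φ ∩ s).Nonempty → (φ ∩ t).Nonempty)) :
    let compatible : Set C → Prop := fun χ => χ.Nonempty ∧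
      ∀ s t : Set C, s.Finite → s.Nonempty → t.Finite → t.Nonempty →
        (χ ∩ s).Nonempty → χ ∩ t = ∅ → ¬ le s t
    let redundant : Set C → Prop := fun χ => compatible χ ∧
      ∃ S : Set (Set C), (∀ ψ ∈ S, compatible ψ) ∧ χ ∉ S ∧ χ = ⋃₀ S
    let NR : Set (Set C) := {χ | compatible χ ∧ ¬ redundant χ}
    (∀ φ : Set C, redundant φ → ∃ S ⊆ NR, φ = ⋃₀ S) ∧
      ∀ s t : Set C, s.Finite → s.Nonempty → t.Finite → t.Nonempty →
        (le s t ↔ ∀ φ ∈ NR, (φ ∩ s).Nonempty → (φ ∩ t).Nonempty) := by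
  intro compatible redundant NR
  have hcompat_def : ∀ χ : Set C, compatible χ ↔ (χ.Nonempty ∧
      ∀ s t : Set C, s.Finite → s.Nonempty → t.Finite → t.Nonempty →
        (χ ∩ s).Nonempty → χ ∩ t = ∅ → ¬ le s t) := fun _ => Iff.rfl
  have hred_def : ∀ χ : Set C, redundant χ ↔ (compatible χ ∧
      ∃ S : Set (Set C), (∀ ψ ∈ S, compatible ψ) ∧ χ ∉ S ∧ χ = ⋃₀ S) := fun _ => Iff.rfl
  have hNR_def : ∀ χ : Set C, χ ∈ NR ↔ compatible χ ∧ ¬ redundant χ := fun _ => Iff.rfl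
  -- For a nonempty chain `c` whose sets all intersect finite `t`, the
  -- intersection of the chain intersects `t`.
  have hchain : ∀ (c : Set (Set C)) (t : Set C), t.Finite → c.Nonempty →
      IsChain (· ⊆ ·) c → (⋂₀ c) ∩ t = ∅ → ∃ χ ∈ c, χ ∩ t = ∅ := by
    intro c t ht hcne hch hint
    by_contra hcon
    push_neg at hcon
    have himfin : ((fun χ => χ ∩ t) '' c).Finite := by
      apply Set.Finite.subset ht.finite_subsets
      rintro _ ⟨χ, -, rfl⟩
      exact fun x hx => hx.2
    obtain ⟨χ₀, hχ₀c, hmin⟩ :=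
      (show ∃ χ₀ ∈ c, ∀ χ ∈ c, χ ∩ t ⊆ χ₀ ∩ t → χ₀ ∩ t = χ ∩ t by
        obtain ⟨i, hi, hm⟩ := Set.Finite.exists_minimalFor' (fun χ : Set C => χ ∩ t) c himfin hcne
        exact ⟨i, hi, fun j hj h => le_antisymm (hm hj h) h⟩)
    have hne : (χ₀ ∩ t).Nonempty := hcon χ₀ hχ₀c
    obtain ⟨x, hxχ₀, hxt⟩ := hne
    have hxall : ∀ χ ∈ c, x ∈ χ := by
      intro χ hχ
      rcases eq_or_ne χ χ₀ with rfl | hne'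
      · exact hxχ₀
      · rcases hch hχ hχ₀c hne' with h | h
        · have : χ₀ ∩ t = χ ∩ t := hmin χ hχ (fun y hy => ⟨h hy.1, hy.2⟩)
          exact (this ▸ (Set.mem_inter hxχ₀ hxt)).1
        · exact h hxχ₀
    have : x ∈ (⋂₀ c) ∩ t := ⟨Set.mem_sInter.2 hxall, hxt⟩
    rw [hint] at this
    exact this
  -- Every point of a compatible set lies in a non-redundant compatible subset.
  have hcover : ∀ φ : Set C, compatible φ → ∀ x ∈ φ,
      ∃ ψ, ψ ∈ NR ∧ x ∈ ψ ∧ ψ ⊆ φ := by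
    intro φ hφ x hx
    set Fam : Set (Set C) := {ψ | compatible ψ ∧ x ∈ ψ ∧ ψ ⊆ φ} with hFam
    have hzorn : ∀ c ⊆ Fam, IsChain (· ⊆ ·) c → c.Nonempty →
        ∃ lb ∈ Fam, ∀ s ∈ c, lb ⊆ s := by
      intro c hcF hch hcne
      obtain ⟨χ₁, hχ₁⟩ := id hcne
      refine ⟨⋂₀ c, ⟨?_, ?_, ?_⟩, fun s hs => Set.sInter_subset_of_mem hs⟩
      · -- compatible (⋂₀ c)
        rw [hcompat_def]
        constructor
        · exact ⟨x, Set.mem_sInter.2 fun χ hχ => (hcF hχ).2.1⟩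
        · intro s t hs hsn ht htn hss hst hle
          obtain ⟨χ, hχc, hχt⟩ := hchain c t ht hcne hch hst
          have hχs : (χ ∩ s).Nonempty := by
            obtain ⟨y, hys, hys'⟩ := hss
            exact ⟨y, (Set.sInter_subset_of_mem hχc) hys, hys'⟩
          exact ((hcompat_def χ).1 (hcF hχc).1).2 s t hs hsn ht htn hχs hχt hle
      · exact Set.mem_sInter.2 fun χ hχ => (hcF hχ).2.1
      · exact (Set.sInter_subset_of_mem hχ₁).trans (hcF hχ₁).2.2
    obtain ⟨m, hmφ, hmmin⟩ :=
      zorn_superset_nonempty Fam hzorn φ ⟨hφ, hx, subset_rfl⟩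
    have hmmem : m ∈ Fam := hmmin.1
    refine ⟨m, ?_, hmmem.2.1, hmmem.2.2⟩
    rw [hNR_def]
    refine ⟨hmmem.1, ?_⟩
    rw [hred_def]
    rintro ⟨-, T, hT, hmT, hmU⟩
    have hxT : x ∈ ⋃₀ T := hmU ▸ hmmem.2.1
    obtain ⟨θ, hθT, hxθ⟩ := hxT
    have hθm : θ ⊆ m := hmU ▸ Set.subset_sUnion_of_mem hθT
    have hθF : θ ∈ Fam := ⟨hT θ hθT, hxθ, hθm.trans hmmem.2.2⟩
    have : θ = m := le_antisymm hθm (hmmin.2 hθF hθm)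
    exact hmT (this ▸ hθT)
  -- A compatible set equals the union of its non-redundant compatible subsets.
  have hdecomp : ∀ φ : Set C, compatible φ → φ = ⋃₀ {ψ | ψ ∈ NR ∧ ψ ⊆ φ} := by
    intro φ hφ
    apply Set.Subset.antisymm
    · intro x hx
      obtain ⟨ψ, hψNR, hxψ, hψφ⟩ := hcover φ hφ x hx
      exact ⟨ψ, ⟨hψNR, hψφ⟩, hxψ⟩
    · exact Set.sUnion_subset fun ψ hψ => hψ.2
  -- Elements of A are compatible.
  have hAcomp : ∀ φ ∈ A, compatible φ := by
    intro φ hφA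
    rw [hcompat_def]
    refine ⟨hAne φ hφA, ?_⟩
    intro s t hs hsn ht htn hφs hφt hle
    have := (hAatom s t hs hsn ht htn).1 hle φ hφA hφs
    rw [hφt] at this
    exact Set.not_nonempty_empty this
  constructor
  · -- redundant atoms are unions of non-redundant atoms
    intro φ hred
    exact ⟨{ψ | ψ ∈ NR ∧ ψ ⊆ φ}, fun ψ hψ => hψ.1,
      hdecomp φ ((hred_def φ).1 hred).1⟩
  · -- the non-redundant atoms atomize S
    intro s t hs hsn ht htn
    constructor
    · intro hle φ hφNR hφs
      have hφc := ((hNR_def φ).1 hφNR).1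
      rcases Set.eq_empty_or_nonempty (φ ∩ t) with h | h
      · exact absurd hle (((hcompat_def φ).1 hφc).2 s t hs hsn ht htn hφs h)
      · exact h
    · intro hNRdisc
      rw [hAatom s t hs hsn ht htn]
      intro φ hφA hφs
      obtain ⟨y, hyφ, hys⟩ := hφs
      obtain ⟨ψ, hψNR, hyψ, hψφ⟩ := hcover φ (hAcomp φ hφA) y hyφ
      obtain ⟨z, hzψ, hzt⟩ := hNRdisc ψ hψNR ⟨y, hyψ, hys⟩
      exact ⟨z, hψφ hzψ, hzt⟩
end
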